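/- Let $K$ be a finite-valued kernel function, $n \in \mathbb{N}$, $\nu_1,\dots,\nu_n > 0$, and let $J$ be an $n$-field function satisfying the two-sided limsup condition: $\limsup_{s \uparrow t} J(s) \ge J(t)$ for all $t \in (0,1]$ and $\limsup_{s \downarrow t} J(s) \ge J(t)$ for all $t \in [0,1)$. Then for each $j \in \{0,\dots,n\}$, the function $m_j(\mathbf{y}) = \sup_{t \in [y_j,y_{j+1}]} F(\mathbf{y},t)$ is lower semicontinuous on the set $S_j := \{\mathbf{x} \in \overline{S} : x_j < x_{j+1}\}$. -/
import Mathlib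


open Set Filter

noncomputable section

/-- A kernel function: finite and concave on `(-1,0)` and `(0,1)`, with equal one-sided
limits at `0`, extended to `[-1,1]` (values in `ℝ ∪ {-∞}`, i.e. never `⊤`) by limits. -/
def IsKernelFunction (K : ℝ → EReal) : Prop :=
  (∀ t ∈ Set.Icc (-1:ℝ) 1, K t ≠ ⊤) ∧
  (∀ t ∈ Set.Ioo (-1:ℝ) 0, K t ≠ ⊥) ∧
  (∀ t ∈ Set.Ioo (0:ℝ) 1, K t ≠ ⊥) ∧
  ConcaveOn ℝ (Set.Ioo (-1:ℝ) 0) (fun t => (K t).toReal) ∧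
  ConcaveOn ℝ (Set.Ioo (0:ℝ) 1) (fun t => (K t).toReal) ∧
  Filter.Tendsto K (nhdsWithin 0 (Set.Iio 0)) (nhds (K 0)) ∧
  Filter.Tendsto K (nhdsWithin 0 (Set.Ioi 0)) (nhds (K 0)) ∧
  Filter.Tendsto K (nhdsWithin (-1) (Set.Ioi (-1:ℝ))) (nhds (K (-1))) ∧
  Filter.Tendsto K (nhdsWithin 1 (Set.Iio (1:ℝ))) (nhds (K 1))

/-- Monotone kernel: non-increasing on `(-1,0)`, non-decreasing on `(0,1)`. -/
def IsMonotoneKernel (K : ℝ → EReal) : Prop :=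
  IsKernelFunction K ∧ AntitoneOn K (Set.Ioo (-1:ℝ) 0) ∧ MonotoneOn K (Set.Ioo (0:ℝ) 1)

/-- The closed simplex of node systems `0 ≤ y 0 ≤ ⋯ ≤ y (n-1) ≤ 1`. -/
def simplex (n : ℕ) : Set (Fin n → ℝ) :=
  {y | Monotone y ∧ ∀ i, y i ∈ Set.Icc (0:ℝ) 1}

/-- The `j`-th node of the node system `y`, with `node y 0 = 0` and `node y (n+1) = 1`. -/
def node {n : ℕ} (y : Fin n → ℝ) (j : ℕ) : ℝ :=
  if h : 1 ≤ j ∧ j ≤ n then y ⟨j - 1, by omega⟩ else if j = 0 then 0 else 1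

/-- An `n`-field function: bounded above on `[0,1]`, with values in `ℝ ∪ {-∞}`, finite
at more than `n` points of `[0,1]`, where `0` and `1` count with weight `1/2`. -/
def IsFieldFunction (n : ℕ) (J : ℝ → EReal) : Prop :=
  (∀ t ∈ Set.Icc (0:ℝ) 1, J t ≠ ⊤) ∧
  (∃ C : ℝ, ∀ t ∈ Set.Icc (0:ℝ) 1, J t ≤ (C : EReal)) ∧
  ∃ T : Finset ℝ, ↑T ⊆ Set.Icc (0:ℝ) 1 ∧ (∀ t ∈ T, J t ≠ ⊥) ∧
    (n : ℝ) < ∑ t ∈ T, (if t = 0 ∨ t = 1 then (1/2 : ℝ) else 1)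

/-- The (weighted) sum of translates function `F(y,t) = J(t) + ∑ ν_j K(t - y_j)`. -/
def Fsum {n : ℕ} (K : ℝ → EReal) (ν : Fin n → ℝ) (J : ℝ → EReal)
    (y : Fin n → ℝ) (t : ℝ) : EReal :=
  J t + ∑ j, (ν j : EReal) * K (t - y j)

/-- The `j`-th interval maximum `m_j(y) = sup_{t ∈ [y_j, y_{j+1}]} F(y,t)`. -/
def mj {n : ℕ} (K : ℝ → EReal) (ν : Fin n → ℝ) (J : ℝ → EReal)
    (y : Fin n → ℝ) (j : ℕ) : EReal :=
  sSup (Fsum K ν J y '' Set.Icc (node y j) (node y (j + 1)))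

/-- The regularity set `Y`: node systems with all interval maxima `> -∞`. -/
def regularitySet {n : ℕ} (K : ℝ → EReal) (ν : Fin n → ℝ) (J : ℝ → EReal) :
    Set (Fin n → ℝ) :=
  {y ∈ simplex n | ∀ j ≤ n, mj K ν J y j ≠ ⊥}

/-- Upper semicontinuous regularization of a function on `[0,1]`. -/
def uscReg (φ : ℝ → EReal) (t : ℝ) : EReal :=
  ⨅ (r : ℝ) (_ : 0 < r), sSup (φ '' (Set.Ioo (t - r) (t + r) ∩ Set.Icc 0 1))

/-- Upper semicontinuous regularization computed within a subset `A` of `[0,1]`. -/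
def uscRegOn (A : Set ℝ) (φ : ℝ → EReal) (t : ℝ) : EReal :=
  ⨅ (r : ℝ) (_ : 0 < r), sSup (φ '' (Set.Ioo (t - r) (t + r) ∩ A))

/- ====================== auxiliary lemmas ====================== -/

lemma node_zero' {n : ℕ} (y : Fin n → ℝ) : node y 0 = 0 := by simp [node]

lemma node_last' {n : ℕ} (y : Fin n → ℝ) : node y (n + 1) = 1 := by
  have : ¬(1 ≤ n + 1 ∧ n + 1 ≤ n) := by omega
  simp [node, this]

lemma node_mem_Icc' {n : ℕ} {y : Fin n → ℝ} (hy : ∀ i, y i ∈ Set.Icc (0:ℝ) 1) (j : ℕ) :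
    node y j ∈ Set.Icc (0:ℝ) 1 := by
  unfold node
  split_ifs with h h'
  · exact hy _
  · exact ⟨le_refl 0, zero_le_one⟩
  · exact ⟨zero_le_one, le_refl 1⟩

lemma continuous_node' {n : ℕ} (j : ℕ) : Continuous (fun y : Fin n → ℝ => node y j) := by
  by_cases h : 1 ≤ j ∧ j ≤ n
  · simp only [node, dif_pos h]
    exact continuous_apply _
  · simp only [node, dif_neg h]
    exact continuous_const

/-- Continuity of the kernel within `[-1,1]`. -/
lemma tendsto_K_Icc {K : ℝ → EReal} (hK : IsKernelFunction K)
    (hKfin : ∀ t ∈ Set.Icc (-1:ℝ) 1, K t ≠ ⊥) :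
    ∀ t ∈ Set.Icc (-1:ℝ) 1, Filter.Tendsto K (nhdsWithin t (Set.Icc (-1:ℝ) 1)) (nhds (K t)) := by
  obtain ⟨hTop, hB1, hB2, hc1, hc2, h0l, h0r, hm1, h1⟩ := hK
  have hcont1 : ContinuousOn K (Set.Ioo (-1:ℝ) 0) := by
    have hKr : ContinuousOn (fun t => (K t).toReal) (Set.Ioo (-1:ℝ) 0) :=
      hc1.continuousOn isOpen_Ioo
    have : ContinuousOn (fun t => (((K t).toReal : ℝ) : EReal)) (Set.Ioo (-1:ℝ) 0) :=
      continuous_coe_real_ereal.comp_continuousOn hKr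
    exact this.congr fun u hu => (EReal.coe_toReal (hTop u ⟨hu.1.le, hu.2.le.trans zero_le_one⟩)
      (hB1 u hu)).symm
  have hcont2 : ContinuousOn K (Set.Ioo (0:ℝ) 1) := by
    have hKr : ContinuousOn (fun t => (K t).toReal) (Set.Ioo (0:ℝ) 1) :=
      hc2.continuousOn isOpen_Ioo
    have : ContinuousOn (fun t => (((K t).toReal : ℝ) : EReal)) (Set.Ioo (0:ℝ) 1) :=
      continuous_coe_real_ereal.comp_continuousOn hKr
    exact this.congr fun u hu =>
      (EReal.coe_toReal (hTop u ⟨le_trans (by norm_num) hu.1.le, hu.2.le⟩) (hB2 u hu)).symm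
  intro t ht
  rcases eq_or_lt_of_le ht.1 with h1' | h1'
  · subst h1'
    have : Filter.Tendsto K (nhdsWithin (-1) (Set.Ici (-1:ℝ))) (nhds (K (-1))) := by
      rw [← Set.Ioi_union_left, nhdsWithin_union, nhdsWithin_singleton]
      exact hm1.sup (tendsto_pure_nhds K (-1))
    exact this.mono_left (nhdsWithin_mono _ Set.Icc_subset_Ici_self)
  rcases eq_or_lt_of_le ht.2 with h2' | h2'
  · subst h2'
    have : Filter.Tendsto K (nhdsWithin 1 (Set.Iic (1:ℝ))) (nhds (K 1)) := by
      rw [← Set.Iio_union_right, nhdsWithin_union, nhdsWithin_singleton]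
      exact h1.sup (tendsto_pure_nhds K 1)
    exact this.mono_left (nhdsWithin_mono _ Set.Icc_subset_Iic_self)
  rcases lt_trichotomy t 0 with h0 | h0 | h0
  · exact ((hcont1.continuousAt (Ioo_mem_nhds h1' h0)).tendsto).mono_left nhdsWithin_le_nhds
  · subst h0
    have : Filter.Tendsto K (nhds (0:ℝ)) (nhds (K 0)) := by
      rw [← nhdsWithin_univ, ← Set.Iic_union_Ioi (a := (0:ℝ)), ← Set.Iio_union_right,
        nhdsWithin_union, nhdsWithin_union, nhdsWithin_singleton]
      exact Filter.Tendsto.sup (Filter.Tendsto.sup h0l (tendsto_pure_nhds K 0)) h0r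
    exact this.mono_left nhdsWithin_le_nhds
  · exact ((hcont2.continuousAt (Ioo_mem_nhds h0 h2')).tendsto).mono_left nhdsWithin_le_nhds

/-- Real-valued continuity of the kernel within `[-1,1]`. -/
lemma Kr_contOn {K : ℝ → EReal} (hK : IsKernelFunction K)
    (hKfin : ∀ t ∈ Set.Icc (-1:ℝ) 1, K t ≠ ⊥) :
    ContinuousOn (fun u => (K u).toReal) (Set.Icc (-1:ℝ) 1) := fun t ht =>
  (EReal.tendsto_toReal (hK.1 t ht) (hKfin t ht)).comp (tendsto_K_Icc hK hKfin t ht)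

lemma coe_real_sum {ι : Type*} (s : Finset ι) (f : ι → ℝ) :
    ((∑ i ∈ s, f i : ℝ) : EReal) = ∑ i ∈ s, ((f i : EReal)) :=
  map_sum (⟨⟨(fun x : ℝ => (x : EReal)), EReal.coe_zero⟩, EReal.coe_add⟩ : ℝ →+ EReal) f s

lemma sub_mem_Icc {a b : ℝ} (ha : a ∈ Set.Icc (0:ℝ) 1) (hb : b ∈ Set.Icc (0:ℝ) 1) :
    a - b ∈ Set.Icc (-1:ℝ) 1 := by
  constructor <;> [skip; skip] <;> obtain ⟨h1, h2⟩ := ha <;> obtain ⟨h3, h4⟩ := hb <;> linarith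

/-- `Fsum` written with a real-valued kernel sum. -/
lemma Fsum_eq_real {n : ℕ} {K : ℝ → EReal} (hK : IsKernelFunction K)
    (hKfin : ∀ t ∈ Set.Icc (-1:ℝ) 1, K t ≠ ⊥) (ν : Fin n → ℝ) (J : ℝ → EReal)
    {y : Fin n → ℝ} (hy : ∀ i, y i ∈ Set.Icc (0:ℝ) 1) {t : ℝ} (ht : t ∈ Set.Icc (0:ℝ) 1) :
    Fsum K ν J y t = J t + ((∑ i, ν i * (K (t - y i)).toReal : ℝ) : EReal) := by
  unfold Fsum
  congr 1
  rw [coe_real_sum]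
  refine Finset.sum_congr rfl fun i _ => ?_
  have hm : t - y i ∈ Set.Icc (-1:ℝ) 1 := sub_mem_Icc ht (hy i)
  rw [EReal.coe_mul, EReal.coe_toReal (hK.1 _ hm) (hKfin _ hm)]

/-- Continuity in `t` of the real kernel sum. -/
lemma Gr_contOn {n : ℕ} {K : ℝ → EReal} (hK : IsKernelFunction K)
    (hKfin : ∀ t ∈ Set.Icc (-1:ℝ) 1, K t ≠ ⊥) (ν : Fin n → ℝ)
    {x : Fin n → ℝ} (hx : ∀ i, x i ∈ Set.Icc (0:ℝ) 1) :
    ContinuousOn (fun t => ∑ i, ν i * (K (t - x i)).toReal) (Set.Icc (0:ℝ) 1) := by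
  intro t ht
  have h : ∀ i : Fin n, Filter.Tendsto (fun k => (K (k - x i)).toReal)
      (nhdsWithin t (Set.Icc (0:ℝ) 1)) (nhds ((K (t - x i)).toReal)) := by
    intro i
    refine ((Kr_contOn hK hKfin) (t - x i) (sub_mem_Icc ht (hx i))).tendsto.comp ?_
    apply tendsto_nhdsWithin_of_tendsto_nhds_of_eventually_within
    · exact ((continuous_id.sub continuous_const).tendsto t).mono_left nhdsWithin_le_nhds
    · exact eventually_nhdsWithin_of_forall fun s hs => sub_mem_Icc hs (hx i)
  exact tendsto_finset_sum _ fun i _ => (h i).const_mul _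

/-- Pushing a near-maximum off a moving right endpoint using the limsup condition. -/
lemma exists_gt_right {n : ℕ} {K : ℝ → EReal} (hK : IsKernelFunction K)
    (hKfin : ∀ t ∈ Set.Icc (-1:ℝ) 1, K t ≠ ⊥) (ν : Fin n → ℝ) {J : ℝ → EReal}
    (hJtop : ∀ t ∈ Set.Icc (0:ℝ) 1, J t ≠ ⊤)
    {x : Fin n → ℝ} (hx : ∀ i, x i ∈ Set.Icc (0:ℝ) 1) {t0 b : ℝ}
    (ht00 : 0 ≤ t0) (hb : t0 < b) (hb1 : b ≤ 1)
    (hlim : J t0 ≤ Filter.limsup J (nhdsWithin t0 (Set.Ioi t0 ∩ Set.Icc 0 1)))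
    {c : EReal} (hc : c < Fsum K ν J x t0) :
    ∃ s ∈ Set.Ioo t0 b, c < Fsum K ν J x s := by
  set L := nhdsWithin t0 (Set.Ioi t0 ∩ Set.Icc 0 1) with hL
  set g : ℝ → ℝ := fun t => ∑ i, ν i * (K (t - x i)).toReal with hg
  have ht0 : t0 ∈ Set.Icc (0:ℝ) 1 := ⟨ht00, hb.le.trans hb1⟩
  rw [Fsum_eq_real hK hKfin ν J hx ht0] at hc
  have hJt0 : J t0 ≠ ⊥ := by
    intro hbot
    rw [hbot] at hc
    simp at hc
  set a := (J t0).toReal with ha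
  have hJa : J t0 = (a : EReal) := (EReal.coe_toReal (hJtop t0 ht0) hJt0).symm
  rw [hJa, ← EReal.coe_add] at hc
  obtain ⟨d, hcd, hd⟩ := EReal.exists_between_coe_real hc
  rw [EReal.coe_lt_coe_iff] at hd
  set δ : ℝ := (a + g t0 - d) / 2 with hδdef
  have hδ : 0 < δ := by simp only [hδdef]; linarith
  have hfreq : ∃ᶠ s in L, ((a - δ : ℝ) : EReal) < J s := by
    refine Filter.frequently_lt_of_lt_limsup (by isBoundedDefault)
      (lt_of_lt_of_le ?_ (hJa ▸ hlim))
    exact_mod_cast sub_lt_self a hδ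
  have hgt : Filter.Tendsto g L (nhds (g t0)) := by
    refine (Gr_contOn hK hKfin ν hx t0 ht0).mono_left (nhdsWithin_mono _ ?_)
    exact Set.inter_subset_right
  have hev1 : ∀ᶠ s in L, g t0 - δ < g s := hgt.eventually (eventually_gt_nhds (by linarith))
  have hev2 : ∀ᶠ s in L, s ∈ Set.Ioi t0 ∩ Set.Icc (0:ℝ) 1 := self_mem_nhdsWithin
  have hev3 : ∀ᶠ s in L, s < b :=
    eventually_nhdsWithin_of_eventually_nhds (eventually_lt_nhds hb)
  obtain ⟨s, hJs, ⟨hgs, hsm⟩, hsb⟩ := (hfreq.and_eventually ((hev1.and hev2).and hev3)).exists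
  refine ⟨s, ⟨hsm.1, hsb⟩, ?_⟩
  rw [Fsum_eq_real hK hKfin ν J hx hsm.2]
  calc c < (d : EReal) := hcd
    _ = ((a - δ : ℝ) : EReal) + ((g t0 - δ : ℝ) : EReal) := by
        have hreal : d = (a - δ) + (g t0 - δ) := by rw [hδdef]; ring
        rw [← EReal.coe_add]
        exact_mod_cast hreal
    _ < J s + ((g s : ℝ) : EReal) := EReal.add_lt_add hJs (by exact_mod_cast hgs)

/-- Pushing a near-maximum off a moving left endpoint using the limsup condition. -/
lemma exists_gt_left {n : ℕ} {K : ℝ → EReal} (hK : IsKernelFunction K)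
    (hKfin : ∀ t ∈ Set.Icc (-1:ℝ) 1, K t ≠ ⊥) (ν : Fin n → ℝ) {J : ℝ → EReal}
    (hJtop : ∀ t ∈ Set.Icc (0:ℝ) 1, J t ≠ ⊤)
    {x : Fin n → ℝ} (hx : ∀ i, x i ∈ Set.Icc (0:ℝ) 1) {t0 b : ℝ}
    (ht00 : t0 ≤ 1) (hb : b < t0) (hb1 : 0 ≤ b)
    (hlim : J t0 ≤ Filter.limsup J (nhdsWithin t0 (Set.Iio t0 ∩ Set.Icc 0 1)))
    {c : EReal} (hc : c < Fsum K ν J x t0) :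
    ∃ s ∈ Set.Ioo b t0, c < Fsum K ν J x s := by
  set L := nhdsWithin t0 (Set.Iio t0 ∩ Set.Icc 0 1) with hL
  set g : ℝ → ℝ := fun t => ∑ i, ν i * (K (t - x i)).toReal with hg
  have ht0 : t0 ∈ Set.Icc (0:ℝ) 1 := ⟨hb1.trans hb.le, ht00⟩
  rw [Fsum_eq_real hK hKfin ν J hx ht0] at hc
  have hJt0 : J t0 ≠ ⊥ := by
    intro hbot
    rw [hbot] at hc
    simp at hc
  set a := (J t0).toReal with ha
  have hJa : J t0 = (a : EReal) := (EReal.coe_toReal (hJtop t0 ht0) hJt0).symm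
  rw [hJa, ← EReal.coe_add] at hc
  obtain ⟨d, hcd, hd⟩ := EReal.exists_between_coe_real hc
  rw [EReal.coe_lt_coe_iff] at hd
  set δ : ℝ := (a + g t0 - d) / 2 with hδdef
  have hδ : 0 < δ := by simp only [hδdef]; linarith
  have hfreq : ∃ᶠ s in L, ((a - δ : ℝ) : EReal) < J s := by
    refine Filter.frequently_lt_of_lt_limsup (by isBoundedDefault)
      (lt_of_lt_of_le ?_ (hJa ▸ hlim))
    exact_mod_cast sub_lt_self a hδ
  have hgt : Filter.Tendsto g L (nhds (g t0)) := by
    refine (Gr_contOn hK hKfin ν hx t0 ht0).mono_left (nhdsWithin_mono _ ?_)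
    exact Set.inter_subset_right
  have hev1 : ∀ᶠ s in L, g t0 - δ < g s := hgt.eventually (eventually_gt_nhds (by linarith))
  have hev2 : ∀ᶠ s in L, s ∈ Set.Iio t0 ∩ Set.Icc (0:ℝ) 1 := self_mem_nhdsWithin
  have hev3 : ∀ᶠ s in L, b < s :=
    eventually_nhdsWithin_of_eventually_nhds (eventually_gt_nhds hb)
  obtain ⟨s, hJs, ⟨hgs, hsm⟩, hsb⟩ := (hfreq.and_eventually ((hev1.and hev2).and hev3)).exists
  refine ⟨s, ⟨hsb, hsm.1⟩, ?_⟩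
  rw [Fsum_eq_real hK hKfin ν J hx hsm.2]
  calc c < (d : EReal) := hcd
    _ = ((a - δ : ℝ) : EReal) + ((g t0 - δ : ℝ) : EReal) := by
        have hreal : d = (a - δ) + (g t0 - δ) := by rw [hδdef]; ring
        rw [← EReal.coe_add]
        exact_mod_cast hreal
    _ < J s + ((g s : ℝ) : EReal) := EReal.add_lt_add hJs (by exact_mod_cast hgs)

/-- Continuity in `y` of `Fsum` for fixed `t1`. -/
lemma tendsto_Fsum_fixed {n : ℕ} {K : ℝ → EReal} (hK : IsKernelFunction K)
    (hKfin : ∀ t ∈ Set.Icc (-1:ℝ) 1, K t ≠ ⊥) (ν : Fin n → ℝ) (J : ℝ → EReal)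
    {S : Set (Fin n → ℝ)} (hS : ∀ y ∈ S, ∀ i, y i ∈ Set.Icc (0:ℝ) 1)
    {x : Fin n → ℝ} (hx : ∀ i, x i ∈ Set.Icc (0:ℝ) 1)
    {t1 : ℝ} (ht1 : t1 ∈ Set.Icc (0:ℝ) 1)
    (hJtop : J t1 ≠ ⊤) :
    Filter.Tendsto (fun y => Fsum K ν J y t1) (nhdsWithin x S)
      (nhds (Fsum K ν J x t1)) := by
  set g : (Fin n → ℝ) → ℝ := fun y => ∑ i, ν i * (K (t1 - y i)).toReal with hg
  have hgc : Filter.Tendsto g (nhdsWithin x S) (nhds (g x)) := by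
    refine tendsto_finset_sum _ fun i _ => Filter.Tendsto.const_mul _ ?_
    refine (Kr_contOn hK hKfin _ (sub_mem_Icc ht1 (hx i))).tendsto.comp ?_
    apply tendsto_nhdsWithin_of_tendsto_nhds_of_eventually_within
    · exact ((continuous_const.sub (continuous_apply i)).tendsto x).mono_left nhdsWithin_le_nhds
    · exact eventually_nhdsWithin_of_forall fun y hy => sub_mem_Icc ht1 (hS y hy i)
  have haddc : ContinuousAt (fun p : EReal × EReal => p.1 + p.2) (J t1, ((g x : ℝ) : EReal)) :=
    EReal.continuousAt_add (Or.inr (by simp)) (Or.inr (by simp))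
  have hpair : Filter.Tendsto (fun y => (J t1, ((g y : ℝ) : EReal)))
      (nhdsWithin x S) (nhds (J t1, ((g x : ℝ) : EReal))) :=
    Filter.Tendsto.prodMk_nhds tendsto_const_nhds
      ((continuous_coe_real_ereal.tendsto _).comp hgc)
  have htend : Filter.Tendsto (fun y => J t1 + ((g y : ℝ) : EReal)) (nhdsWithin x S)
      (nhds (J t1 + ((g x : ℝ) : EReal))) := haddc.tendsto.comp hpair
  rw [Fsum_eq_real hK hKfin ν J hx ht1]
  refine htend.congr' ?_
  filter_upwards [self_mem_nhdsWithin] with y hy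
  exact (Fsum_eq_real hK hKfin ν J (hS y hy) ht1).symm

/-- For a finite-valued kernel and a field satisfying the two-sided limsup condition,
each `m_j` is lower semicontinuous on `S_j = {x ∈ S̄ : x_j < x_{j+1}}`. -/
theorem mj_lowerSemicontinuousOn_Sj (n : ℕ) (hn : 0 < n)
    (K : ℝ → EReal) (hK : IsKernelFunction K)
    (hKfin : ∀ t ∈ Set.Icc (-1:ℝ) 1, K t ≠ ⊥)
    (ν : Fin n → ℝ) (hν : ∀ i, 0 < ν i)
    (J : ℝ → EReal) (hJ : IsFieldFunction n J)
    (hlim1 : ∀ t ∈ Set.Ioc (0:ℝ) 1,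
      J t ≤ Filter.limsup J (nhdsWithin t (Set.Iio t ∩ Set.Icc 0 1)))
    (hlim2 : ∀ t ∈ Set.Ico (0:ℝ) 1,
      J t ≤ Filter.limsup J (nhdsWithin t (Set.Ioi t ∩ Set.Icc 0 1))) :
    ∀ j ≤ n, LowerSemicontinuousOn (fun y => mj K ν J y j)
      {y ∈ simplex n | node y j < node y (j + 1)} := by
  intro j hj
  set S : Set (Fin n → ℝ) := {y ∈ simplex n | node y j < node y (j + 1)} with hSdef
  intro x hx c hc
  obtain ⟨hxs, hxlt⟩ := hx
  have hxmem : ∀ i, x i ∈ Set.Icc (0:ℝ) 1 := hxs.2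
  have hnj0 : node x j ∈ Set.Icc (0:ℝ) 1 := node_mem_Icc' hxmem j
  have hnj1 : node x (j + 1) ∈ Set.Icc (0:ℝ) 1 := node_mem_Icc' hxmem (j + 1)
  -- extract a near-maximum point
  have hc' : c < sSup (Fsum K ν J x '' Set.Icc (node x j) (node x (j + 1))) := hc
  obtain ⟨_, ⟨t0, ht0, rfl⟩, hct0⟩ := lt_sSup_iff.mp hc'
  -- find a "safe" near-maximum point
  have key : ∃ t1 ∈ Set.Icc (node x j) (node x (j + 1)), c < Fsum K ν J x t1 ∧
      (node x j < t1 ∨ j = 0) ∧ (t1 < node x (j + 1) ∨ j = n) := by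
    rcases eq_or_lt_of_le ht0.1 with hL | hL
    · -- t0 = node x j
      rcases Nat.eq_zero_or_pos j with hj0 | hj0
      · exact ⟨t0, ht0, hct0, Or.inr hj0, Or.inl (hL ▸ hxlt)⟩
      · have hjn : 1 ≤ j ∧ j ≤ n := ⟨hj0, hj⟩
        have ht00 : (0:ℝ) ≤ t0 := hL ▸ hnj0.1
        have hlim := hlim2 t0 ⟨ht00, by
          have := hnj1.2; rw [← hL] at ht0 ⊢; exact lt_of_lt_of_le (hL ▸ hxlt) this⟩
        obtain ⟨s, hs, hcs⟩ := exists_gt_right hK hKfin ν hJ.1 hxmem ht00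
          (hL ▸ hxlt) hnj1.2 hlim hct0
        exact ⟨s, ⟨hL ▸ hs.1.le, hs.2.le⟩, hcs, Or.inl (hL ▸ hs.1), Or.inl hs.2⟩
    rcases eq_or_lt_of_le ht0.2 with hR | hR
    · -- t0 = node x (j+1)
      rcases eq_or_lt_of_le hj with hjn | hjn
      · exact ⟨t0, ht0, hct0, Or.inl hL, Or.inr hjn⟩
      · have ht01 : t0 ≤ 1 := hR ▸ hnj1.2
        have hlim := hlim1 t0 ⟨lt_of_le_of_lt hnj0.1 hL, ht01⟩
        obtain ⟨s, hs, hcs⟩ := exists_gt_left hK hKfin ν hJ.1 hxmem ht01 hL hnj0.1 hlim hct0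
        exact ⟨s, ⟨hs.1.le, hR ▸ hs.2.le⟩, hcs, Or.inl hs.1, Or.inl (hR ▸ hs.2)⟩
    · exact ⟨t0, ht0, hct0, Or.inl hL, Or.inl hR⟩
  obtain ⟨t1, ht1, hct1, hsafeL, hsafeR⟩ := key
  have ht1Icc : t1 ∈ Set.Icc (0:ℝ) 1 := ⟨hnj0.1.trans ht1.1, ht1.2.trans hnj1.2⟩
  -- eventually t1 is in the moving interval
  have hevL : ∀ᶠ y in nhdsWithin x S, node y j ≤ t1 := by
    rcases hsafeL with h | h
    · have : ∀ᶠ y in nhds x, node y j < t1 :=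
        ((continuous_node' j).tendsto x).eventually (eventually_lt_nhds h)
      exact (this.filter_mono nhdsWithin_le_nhds).mono fun y hy => hy.le
    · subst h
      filter_upwards [self_mem_nhdsWithin] with y hy
      rw [node_zero']
      exact hnj0.1.trans ht1.1
  have hevR : ∀ᶠ y in nhdsWithin x S, t1 ≤ node y (j + 1) := by
    rcases hsafeR with h | h
    · have : ∀ᶠ y in nhds x, t1 < node y (j + 1) :=
        ((continuous_node' (j+1)).tendsto x).eventually (eventually_gt_nhds h)
      exact (this.filter_mono nhdsWithin_le_nhds).mono fun y hy => hy.le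
    · subst h
      filter_upwards [self_mem_nhdsWithin] with y hy
      rw [node_last']
      exact ht1.2.trans hnj1.2
  -- eventually F(y, t1) > c
  have hJt1top : J t1 ≠ ⊤ := hJ.1 t1 ht1Icc
  have htend := tendsto_Fsum_fixed hK hKfin ν J
    (fun y (hy : y ∈ S) => hy.1.2) hxmem ht1Icc hJt1top
  have hevF : ∀ᶠ y in nhdsWithin x S, c < Fsum K ν J y t1 :=
    htend.eventually (eventually_gt_nhds hct1)
  filter_upwards [hevL, hevR, hevF] with y h1 h2 h3
  exact lt_of_lt_of_le h3 (le_sSup (Set.mem_image_of_mem _ ⟨h1, h2⟩))
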